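/- Let (X,d,μ) be a metric measure space where μ is a Borel measure that is positive on nonempty open sets and finite on bounded sets. Let 1 ≤ p < q < ∞ and let C_e > 0. Suppose the Sobolev embedding inequality holds: for every μ-measurable function u : X → ℝ and every nonnegative μ-measurable function g : X → ℝ such that |u(x) − u(y)| ≤ d(x,y)(g(x) + g(y)) for μ-almost every x and y, one has (∫_X |u|^q dμ)^{1/q} ≤ C_e [(∫_X |u|^p dμ)^{1/p} + (∫_X g^p dμ)^{1/p}]. Then there exists a constant C > 0 depending only on p, q, C_e such that μ(B(x,r)) ≥ C r^n for every x ∈ X and every r ∈ (0,1], where n = pq/(q−p) (equivalently 1/p − 1/q = 1/n). -/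

import Mathlib

open MeasureTheory Metric ENNReal

private lemma clamp_lip (a b : ℝ) : |max 0 (min 1 a) - max 0 (min 1 b)| ≤ |a - b| := by
  have h0 : 0 ≤ |a - b| := abs_nonneg _
  have h1 : a - b ≤ |a - b| := le_abs_self _
  have h2 : -(a - b) ≤ |a - b| := neg_le_abs _
  rw [abs_le]
  constructor <;>
  · simp only [max_def, min_def]
    split_ifs <;> linarith

private lemma geom_sum_le_div (x : ℝ) (h0 : 0 ≤ x) (h1 : x < 1) (K : ℕ) :
    ∑ k ∈ Finset.range K, x ^ k ≤ 1 / (1 - x) := by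
  have hx : 0 < 1 - x := by linarith
  rw [le_div_iff₀ hx]
  have h := geom_sum_mul x K
  nlinarith [pow_nonneg h0 K]

private lemma weighted_geom_sum_le (θ : ℝ) (h0 : 0 < θ) (h1 : θ < 1) (K : ℕ) :
    ∑ k ∈ Finset.range K, (k : ℝ) * θ ^ k ≤ Real.sqrt θ / (1 - Real.sqrt θ) ^ 2 := by
  set w := Real.sqrt θ with hw
  have hw0 : 0 < w := Real.sqrt_pos.2 h0
  have hww : w * w = θ := Real.mul_self_sqrt h0.le
  have hw1 : w < 1 := by nlinarith
  have h1w : 0 < 1 - w := by linarith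
  have hterm : ∀ k : ℕ, (k : ℝ) * θ ^ k ≤ w ^ k * (w / (1 - w)) := by
    intro k
    have hinv : (0:ℝ) < 1 / w := by positivity
    have hb : 1 + (k : ℝ) * (1 / w - 1) ≤ (1 / w) ^ k := by
      have h := one_add_mul_le_pow (a := 1 / w - 1) (by nlinarith) k
      calc 1 + (k:ℝ) * (1/w - 1) ≤ (1 + (1/w - 1)) ^ k := h
        _ = (1/w) ^ k := by ring_nf
    have hk : (k : ℝ) * (1 / w - 1) ≤ (1 / w) ^ k := by linarith
    have hfrac : 1 / w - 1 = (1 - w) / w := by field_simp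
    have hk2 : (k : ℝ) ≤ (1 / w) ^ k * (w / (1 - w)) := by
      rw [hfrac] at hk
      calc (k : ℝ) = ((k : ℝ) * ((1 - w) / w)) * (w / (1 - w)) := by field_simp
        _ ≤ (1 / w) ^ k * (w / (1 - w)) :=
            mul_le_mul_of_nonneg_right hk (by positivity)
    have hpow : (1 / w) ^ k * θ ^ k = w ^ k := by
      rw [← mul_pow]
      congr 1
      rw [← hww]
      field_simp
    calc (k : ℝ) * θ ^ k ≤ ((1 / w) ^ k * (w / (1 - w))) * θ ^ k :=
          mul_le_mul_of_nonneg_right hk2 (by positivity)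
      _ = ((1 / w) ^ k * θ ^ k) * (w / (1 - w)) := by ring
      _ = w ^ k * (w / (1 - w)) := by rw [hpow]
  calc ∑ k ∈ Finset.range K, (k : ℝ) * θ ^ k
      ≤ ∑ k ∈ Finset.range K, w ^ k * (w / (1 - w)) :=
        Finset.sum_le_sum fun k _ => hterm k
    _ = (∑ k ∈ Finset.range K, w ^ k) * (w / (1 - w)) := by rw [← Finset.sum_mul]
    _ ≤ (1 / (1 - w)) * (w / (1 - w)) :=
        mul_le_mul_of_nonneg_right (geom_sum_le_div w hw0.le hw1 K) (by positivity)
    _ = w / (1 - w) ^ 2 := by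
        rw [div_mul_div_comm, one_mul, sq]

/-- If the Hajłasz–Sobolev embedding `M^{1,p}(X) ↪ L^q(X)` holds with constant `C_e`
in a metric measure space whose Borel measure is positive on nonempty open sets and
finite on bounded sets, then `μ(B(x,r)) ≥ C rⁿ` for all `x` and `0 < r ≤ 1`,
where `n = pq/(q-p)`, with `C = C(p, q, C_e) > 0`. -/
theorem sobolev_embedding_implies_measure_lower_bound
    {X : Type*} [MetricSpace X] [MeasurableSpace X] [BorelSpace X]
    (μ : Measure X)
    (hopen : ∀ U : Set X, IsOpen U → U.Nonempty → 0 < μ U)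
    (hbounded : ∀ s : Set X, Bornology.IsBounded s → μ s < ∞)
    (p q : ℝ) (hp : 1 ≤ p) (hpq : p < q)
    (Ce : ℝ) (hCe : 0 < Ce)
    (hembed : ∀ u g : X → ℝ, AEMeasurable u μ → AEMeasurable g μ → (∀ y, 0 ≤ g y) →
      (∀ᵐ y ∂μ, ∀ᵐ z ∂μ, |u y - u z| ≤ dist y z * (g y + g z)) →
      (∫⁻ y, ENNReal.ofReal |u y| ^ q ∂μ) ^ (1 / q) ≤
        ENNReal.ofReal Ce *
          ((∫⁻ y, ENNReal.ofReal |u y| ^ p ∂μ) ^ (1 / p) +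
            (∫⁻ y, ENNReal.ofReal (g y) ^ p ∂μ) ^ (1 / p))) :
    ∃ C : ℝ, 0 < C ∧ ∀ x : X, ∀ r : ℝ, 0 < r → r ≤ 1 →
      ENNReal.ofReal (C * r ^ (p * q / (q - p))) ≤ μ (ball x r) := by
  have hp0 : (0:ℝ) < p := lt_of_lt_of_le one_pos hp
  have hq0 : (0:ℝ) < q := hp0.trans hpq
  have hqp : (0:ℝ) < q - p := sub_pos.2 hpq
  set θ : ℝ := p / q with hθdef
  have hθ0 : 0 < θ := div_pos hp0 hq0
  have hθ1 : θ < 1 := (div_lt_one hq0).2 hpq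
  have h1θ : 0 < 1 - θ := by linarith
  have hn : p * q / (q - p) = p / (1 - θ) := by
    rw [hθdef]
    field_simp
  set DD : ℝ := max (2 * Ce) 1 with hDDdef
  have hDD1 : (1:ℝ) ≤ DD := le_max_right _ _
  have hDD0 : (0:ℝ) < DD := lt_of_lt_of_le one_pos hDD1
  have hCe2 : 2 * Ce ≤ DD := le_max_left _ _
  set Sθ : ℝ := Real.sqrt θ / (1 - Real.sqrt θ) ^ 2 with hSθdef
  set E : ℝ := -(p * Real.log (4 * DD) / (1 - θ) + p * Real.log 2 * Sθ) with hEdef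
  refine ⟨Real.exp E / 2, by positivity, ?_⟩
  intro x r hr hr1
  have hballpos : ∀ s : ℝ, 0 < s → 0 < μ (ball x s) := fun s hs =>
    hopen _ isOpen_ball ⟨x, mem_ball_self hs⟩
  have hballfin : ∀ s : ℝ, μ (ball x s) ≠ ∞ := fun s =>
    (hbounded _ isBounded_ball).ne
  -- KEY one-step estimate from the embedding
  have key : ∀ s' s : ℝ, 0 < s' → s' < s → s ≤ 1 →
      ENNReal.ofReal ((s - s') / DD) ^ p * μ (ball x s') ^ θ ≤ μ (ball x s) := by
    intro s' s hs'0 hs's hs1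
    have hε0 : (0:ℝ) < s - s' := sub_pos.2 hs's
    set ε : ℝ := s - s' with hεdef
    have hε1 : ε ≤ 1 := by rw [hεdef]; linarith
    set u : X → ℝ := fun y => max 0 (min 1 ((s - dist x y) / ε)) with hudef
    set g : X → ℝ := (ball x s).indicator (fun _ => 1 / ε) with hgdef
    have hu_cont : Continuous u := by
      apply continuous_const.max
      exact continuous_const.min ((continuous_const.sub
        (continuous_const.dist continuous_id)).div_const ε)
    have hu_meas : AEMeasurable u μ := hu_cont.measurable.aemeasurable
    have hg_meas : AEMeasurable g μ :=
      (measurable_const.indicator measurableSet_ball).aemeasurable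
    have hg_nonneg : ∀ y, 0 ≤ g y := fun y =>
      Set.indicator_nonneg (fun _ _ => by positivity) y
    have hu_nonneg : ∀ y, 0 ≤ u y := fun y => le_max_left _ _
    have hu_le_one : ∀ y, u y ≤ 1 := fun y => max_le zero_le_one (min_le_left _ _)
    have hu_out : ∀ y, y ∉ ball x s → u y = 0 := by
      intro y hy
      have hd : s ≤ dist x y := by
        rw [mem_ball, not_lt] at hy
        rwa [dist_comm]
      have hnum : (s - dist x y) / ε ≤ 0 :=
        div_nonpos_of_nonpos_of_nonneg (by linarith) hε0.le
      simp only [hudef]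
      exact max_eq_left ((min_le_right _ _).trans hnum)
    have haux : ∀ y z, y ∈ ball x s → |u y - u z| ≤ dist y z * (g y + g z) := by
      intro y z hy
      have h1 : |u y - u z| ≤ |(s - dist x y) / ε - (s - dist x z) / ε| := clamp_lip _ _
      have h2 : (s - dist x y) / ε - (s - dist x z) / ε = (dist x z - dist x y) / ε := by
        ring
      have h3 : |dist x z - dist x y| ≤ dist y z := by
        have h := abs_dist_sub_le z y x
        rwa [dist_comm z x, dist_comm y x, dist_comm z y] at h
      have h4 : (1:ℝ) / ε ≤ g y + g z := by
        have hgy : g y = 1 / ε := by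
          simp only [hgdef]
          exact Set.indicator_of_mem hy _
        have hgz := hg_nonneg z
        linarith
      calc |u y - u z| ≤ |(dist x z - dist x y) / ε| := by rw [← h2]; exact h1
        _ = |dist x z - dist x y| / ε := by rw [abs_div, abs_of_pos hε0]
        _ ≤ dist y z / ε := by gcongr
        _ = dist y z * (1 / ε) := by ring
        _ ≤ dist y z * (g y + g z) := mul_le_mul_of_nonneg_left h4 dist_nonneg
    have hgrad : ∀ y z, |u y - u z| ≤ dist y z * (g y + g z) := by
      intro y z
      by_cases hy : y ∈ ball x s
      · exact haux y z hy
      by_cases hz : z ∈ ball x s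
      · have h := haux z y hz
        rw [abs_sub_comm, dist_comm, add_comm (g y) (g z)]
        exact h
      · rw [hu_out y hy, hu_out z hz, sub_zero, abs_zero]
        exact mul_nonneg dist_nonneg (add_nonneg (hg_nonneg y) (hg_nonneg z))
    have int_q : μ (ball x s') ≤ ∫⁻ y, ENNReal.ofReal |u y| ^ q ∂μ := by
      have hpt : ∀ y, (ball x s').indicator (fun _ => (1:ℝ≥0∞)) y ≤
          ENNReal.ofReal |u y| ^ q := by
        intro y
        by_cases hy : y ∈ ball x s'
        · have hd : dist x y < s' := by
            rw [mem_ball] at hy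
            rwa [dist_comm]
          have huy : u y = 1 := by
            have h5 : (1:ℝ) ≤ (s - dist x y) / ε := by
              rw [le_div_iff₀ hε0, hεdef]
              linarith
            simp only [hudef]
            rw [min_eq_left h5, max_eq_right zero_le_one]
          rw [Set.indicator_of_mem hy, huy]
          simp
        · rw [Set.indicator_of_notMem hy]
          exact zero_le
      calc μ (ball x s') = ∫⁻ y, (ball x s').indicator (fun _ => (1:ℝ≥0∞)) y ∂μ := by
            rw [lintegral_indicator_const measurableSet_ball, one_mul]
        _ ≤ _ := lintegral_mono hpt
    have int_p : (∫⁻ y, ENNReal.ofReal |u y| ^ p ∂μ) ≤ μ (ball x s) := by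
      have hpt : ∀ y, ENNReal.ofReal |u y| ^ p ≤
          (ball x s).indicator (fun _ => (1:ℝ≥0∞)) y := by
        intro y
        by_cases hy : y ∈ ball x s
        · rw [Set.indicator_of_mem hy]
          have h5 : ENNReal.ofReal |u y| ≤ 1 := by
            rw [abs_of_nonneg (hu_nonneg y)]
            exact ENNReal.ofReal_le_one.2 (hu_le_one y)
          calc ENNReal.ofReal |u y| ^ p ≤ (1:ℝ≥0∞) ^ p :=
                ENNReal.rpow_le_rpow h5 hp0.le
            _ = 1 := ENNReal.one_rpow p
        · rw [Set.indicator_of_notMem hy, hu_out y hy]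
          simp [ENNReal.zero_rpow_of_pos hp0]
      calc (∫⁻ y, ENNReal.ofReal |u y| ^ p ∂μ)
          ≤ ∫⁻ y, (ball x s).indicator (fun _ => (1:ℝ≥0∞)) y ∂μ := lintegral_mono hpt
        _ = μ (ball x s) := by rw [lintegral_indicator_const measurableSet_ball, one_mul]
    have int_g : (∫⁻ y, ENNReal.ofReal (g y) ^ p ∂μ) =
        ENNReal.ofReal (1 / ε) ^ p * μ (ball x s) := by
      have hpt : ∀ y, ENNReal.ofReal (g y) ^ p =
          (ball x s).indicator (fun _ => ENNReal.ofReal (1 / ε) ^ p) y := by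
        intro y
        by_cases hy : y ∈ ball x s
        · rw [Set.indicator_of_mem hy]
          congr 2
          simp only [hgdef]
          exact Set.indicator_of_mem hy _
        · rw [Set.indicator_of_notMem hy]
          have hgy : g y = 0 := by
            simp only [hgdef]
            exact Set.indicator_of_notMem hy _
          rw [hgy]
          simp [ENNReal.zero_rpow_of_pos hp0]
      rw [lintegral_congr hpt, lintegral_indicator_const measurableSet_ball]
    have hemb := hembed u g hu_meas hg_meas hg_nonneg
      (ae_of_all _ fun y => ae_of_all _ fun z => hgrad y z)
    have hA : μ (ball x s') ^ (1/q) ≤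
        ENNReal.ofReal (2 * Ce / ε) * μ (ball x s) ^ (1/p) := by
      refine le_trans (ENNReal.rpow_le_rpow int_q (by positivity)) (le_trans hemb ?_)
      have e1 : (∫⁻ y, ENNReal.ofReal |u y| ^ p ∂μ) ^ (1/p) ≤ μ (ball x s) ^ (1/p) :=
        ENNReal.rpow_le_rpow int_p (by positivity)
      have e2 : (∫⁻ y, ENNReal.ofReal (g y) ^ p ∂μ) ^ (1/p) =
          ENNReal.ofReal (1 / ε) * μ (ball x s) ^ (1/p) := by
        rw [int_g, ENNReal.mul_rpow_of_nonneg _ _ (by positivity), ← ENNReal.rpow_mul,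
          mul_one_div_cancel hp0.ne', ENNReal.rpow_one]
      have e3 : (1 : ℝ≥0∞) + ENNReal.ofReal (1 / ε) ≤ ENNReal.ofReal (2 / ε) := by
        rw [← ENNReal.ofReal_one, ← ENNReal.ofReal_add zero_le_one (by positivity)]
        apply ENNReal.ofReal_le_ofReal
        have h1ε : (1:ℝ) ≤ 1 / ε := by
          rw [le_div_iff₀ hε0]
          linarith
        have h2ε : (2:ℝ) / ε = 1 / ε + 1 / ε := by ring
        linarith
      calc ENNReal.ofReal Ce * ((∫⁻ y, ENNReal.ofReal |u y| ^ p ∂μ) ^ (1/p) +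
            (∫⁻ y, ENNReal.ofReal (g y) ^ p ∂μ) ^ (1/p))
          ≤ ENNReal.ofReal Ce * (μ (ball x s) ^ (1/p) +
            ENNReal.ofReal (1 / ε) * μ (ball x s) ^ (1/p)) := by
            exact mul_le_mul_right (add_le_add e1 (le_of_eq e2)) _
        _ = ENNReal.ofReal Ce * ((1 + ENNReal.ofReal (1 / ε)) * μ (ball x s) ^ (1/p)) := by
            ring
        _ ≤ ENNReal.ofReal Ce * (ENNReal.ofReal (2 / ε) * μ (ball x s) ^ (1/p)) := by
            exact mul_le_mul_right (mul_le_mul_left e3 _) _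
        _ = ENNReal.ofReal (2 * Ce / ε) * μ (ball x s) ^ (1/p) := by
            rw [← mul_assoc, ← ENNReal.ofReal_mul hCe.le,
              show Ce * (2 / ε) = 2 * Ce / ε from by ring]
    have hAp : μ (ball x s') ^ θ ≤ ENNReal.ofReal (2 * Ce / ε) ^ p * μ (ball x s) := by
      have h6 := ENNReal.rpow_le_rpow hA hp0.le
      rw [← ENNReal.rpow_mul, ENNReal.mul_rpow_of_nonneg _ _ hp0.le, ← ENNReal.rpow_mul,
        one_div_mul_cancel hp0.ne', ENNReal.rpow_one] at h6
      have h7 : 1 / q * p = θ := by rw [hθdef]; ring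
      rwa [h7] at h6
    have hprod : ENNReal.ofReal (ε / DD) ^ p * ENNReal.ofReal (2 * Ce / ε) ^ p ≤ 1 := by
      rw [← ENNReal.mul_rpow_of_nonneg _ _ hp0.le, ← ENNReal.ofReal_mul (by positivity)]
      have hle : ε / DD * (2 * Ce / ε) ≤ 1 := by
        have heq : ε / DD * (2 * Ce / ε) = 2 * Ce / DD := by
          field_simp
        rw [heq, div_le_one hDD0]
        exact hCe2
      calc (ENNReal.ofReal (ε / DD * (2 * Ce / ε))) ^ p ≤ (1:ℝ≥0∞) ^ p := by
            apply ENNReal.rpow_le_rpow _ hp0.le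
            rw [← ENNReal.ofReal_one]
            exact ENNReal.ofReal_le_ofReal hle
        _ = 1 := ENNReal.one_rpow p
    calc ENNReal.ofReal (ε / DD) ^ p * μ (ball x s') ^ θ
        ≤ ENNReal.ofReal (ε / DD) ^ p *
          (ENNReal.ofReal (2 * Ce / ε) ^ p * μ (ball x s)) := mul_le_mul_right hAp _
      _ = (ENNReal.ofReal (ε / DD) ^ p * ENNReal.ofReal (2 * Ce / ε) ^ p) *
          μ (ball x s) := by ring
      _ ≤ 1 * μ (ball x s) := mul_le_mul_left hprod _
      _ = μ (ball x s) := one_mul _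
  -- iteration along radii r/2 + r/2^(K+1)
  set R : ℕ → ℝ := fun K => r / 2 + r / 2 ^ (K + 1) with hRdef
  set P : ℕ → ℝ := fun K =>
    ∏ k ∈ Finset.range K, (r / (2 ^ (k + 2) * DD)) ^ (p * θ ^ k) with hPdef
  have hR0 : R 0 = r := by
    simp only [hRdef]
    norm_num
  have hRpos : ∀ K, 0 < R K := by
    intro K
    simp only [hRdef]
    positivity
  have hRhalf : ∀ K, r / 2 ≤ R K := by
    intro K
    simp only [hRdef]
    have : (0:ℝ) < r / 2 ^ (K + 1) := by positivity
    linarith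
  have hRle : ∀ K, R K ≤ r := by
    intro K
    simp only [hRdef]
    have h2 : (2:ℝ) ≤ 2 ^ (K + 1) := by
      calc (2:ℝ) = 2 ^ 1 := (pow_one 2).symm
        _ ≤ 2 ^ (K + 1) := by
          apply pow_le_pow_right₀ one_le_two
          omega
    have h3 : r / 2 ^ (K + 1) ≤ r / 2 := by
      apply div_le_div_of_nonneg_left hr.le two_pos h2
    linarith
  have hRgap : ∀ K, R K - R (K + 1) = r / 2 ^ (K + 2) := by
    intro K
    simp only [hRdef]
    have h1 : (2:ℝ) ^ (K + 2) = 2 * 2 ^ (K + 1) := by ring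
    have h2 : (0:ℝ) < (2:ℝ) ^ (K + 1) := by positivity
    rw [h1]
    field_simp
    ring
  have hPpos : ∀ K, 0 < P K := by
    intro K
    simp only [hPdef]
    exact Finset.prod_pos fun k _ => Real.rpow_pos_of_pos (by positivity) _
  have iter : ∀ K : ℕ, ENNReal.ofReal (P K) * μ (ball x (R K)) ^ (θ ^ K) ≤ μ (ball x r) := by
    intro K
    induction K with
    | zero =>
      rw [hR0]
      simp only [hPdef, Finset.range_zero, Finset.prod_empty, pow_zero,
        ENNReal.rpow_one, ENNReal.ofReal_one, one_mul]
      exact le_rfl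
    | succ K ih =>
      have hθK : (0:ℝ) ≤ θ ^ K := pow_nonneg hθ0.le K
      have hgapK : (0:ℝ) < r / 2 ^ (K + 2) := by positivity
      have hlt : R (K + 1) < R K := by
        simp only [hRdef]
        have h2 : r / 2 ^ (K + 1 + 1) < r / 2 ^ (K + 1) := by
          apply div_lt_div_of_pos_left hr (by positivity)
          exact pow_lt_pow_right₀ one_lt_two (by omega)
        linarith
      have hs1 : R K ≤ 1 := (hRle K).trans hr1
      have hstep := key (R (K + 1)) (R K) (hRpos (K + 1)) hlt hs1
      rw [hRgap K, div_div] at hstep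
      have h7 := ENNReal.rpow_le_rpow hstep hθK
      rw [ENNReal.mul_rpow_of_nonneg _ _ hθK, ← ENNReal.rpow_mul, ← ENNReal.rpow_mul] at h7
      have hPsucc : P (K + 1) = P K * (r / (2 ^ (K + 2) * DD)) ^ (p * θ ^ K) := by
        simp only [hPdef]
        exact Finset.prod_range_succ _ K
      have hofP : ENNReal.ofReal (P (K + 1)) = ENNReal.ofReal (P K) *
          ENNReal.ofReal (r / (2 ^ (K + 2) * DD)) ^ (p * θ ^ K) := by
        rw [hPsucc, ENNReal.ofReal_mul (hPpos K).le,
          ENNReal.ofReal_rpow_of_pos (by positivity)]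
      have hθsucc : θ ^ (K + 1) = θ * θ ^ K := by ring
      calc ENNReal.ofReal (P (K + 1)) * μ (ball x (R (K + 1))) ^ (θ ^ (K + 1))
          = ENNReal.ofReal (P K) * (ENNReal.ofReal (r / (2 ^ (K + 2) * DD)) ^ (p * θ ^ K) *
            μ (ball x (R (K + 1))) ^ (θ * θ ^ K)) := by
            rw [hofP, hθsucc]
            ring
        _ ≤ ENNReal.ofReal (P K) * μ (ball x (R K)) ^ (θ ^ K) := mul_le_mul_right h7 _
        _ ≤ μ (ball x r) := ih
  -- lower bound on P K, uniform in K
  have hPbound : ∀ K, Real.exp E * r ^ (p * q / (q - p)) ≤ P K := by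
    intro K
    have h4DD : Real.log (4 * DD) = 2 * Real.log 2 + Real.log DD := by
      rw [Real.log_mul (by norm_num) hDD0.ne',
        show (4:ℝ) = 2 ^ 2 from by norm_num, Real.log_pow]
      push_cast
      ring
    have hlogP : P K = Real.exp (∑ k ∈ Finset.range K,
        (Real.log r - ((k:ℝ) + 2) * Real.log 2 - Real.log DD) * (p * θ ^ k)) := by
      simp only [hPdef]
      rw [Real.exp_sum]
      apply Finset.prod_congr rfl
      intro k _
      rw [Real.rpow_def_of_pos (by positivity)]
      congr 1
      rw [Real.log_div hr.ne' (by positivity), Real.log_mul (by positivity) hDD0.ne',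
        Real.log_pow]
      push_cast
      ring
    have hterm : ∀ k : ℕ, (Real.log r - ((k:ℝ) + 2) * Real.log 2 - Real.log DD) * (p * θ ^ k)
        = p * (Real.log r - Real.log (4 * DD)) * θ ^ k
          - p * Real.log 2 * ((k:ℝ) * θ ^ k) := by
      intro k
      rw [h4DD]
      ring
    have hsum : (∑ k ∈ Finset.range K,
        (Real.log r - ((k:ℝ) + 2) * Real.log 2 - Real.log DD) * (p * θ ^ k))
        = p * (Real.log r - Real.log (4 * DD)) * (∑ k ∈ Finset.range K, θ ^ k)
          - p * Real.log 2 * (∑ k ∈ Finset.range K, (k:ℝ) * θ ^ k) := by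
      rw [Finset.sum_congr rfl (fun k _ => hterm k), Finset.sum_sub_distrib,
        ← Finset.mul_sum, ← Finset.mul_sum]
    have hS1 : ∑ k ∈ Finset.range K, θ ^ k ≤ 1 / (1 - θ) :=
      geom_sum_le_div θ hθ0.le hθ1 K
    have hS2 : ∑ k ∈ Finset.range K, (k:ℝ) * θ ^ k ≤ Sθ := by
      rw [hSθdef]
      exact weighted_geom_sum_le θ hθ0 hθ1 K
    have hA0 : Real.log r - Real.log (4 * DD) ≤ 0 := by
      have h5 : Real.log r ≤ 0 := Real.log_nonpos hr.le hr1
      have h6 : 0 ≤ Real.log (4 * DD) := Real.log_nonneg (by linarith)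
      linarith
    have hl2 : (0:ℝ) ≤ Real.log 2 := Real.log_nonneg one_le_two
    have hm1 : p * (Real.log r - Real.log (4 * DD)) * (1 / (1 - θ)) ≤
        p * (Real.log r - Real.log (4 * DD)) * (∑ k ∈ Finset.range K, θ ^ k) :=
      mul_le_mul_of_nonpos_left hS1 (by nlinarith)
    have hm2 : p * Real.log 2 * (∑ k ∈ Finset.range K, (k:ℝ) * θ ^ k) ≤
        p * Real.log 2 * Sθ :=
      mul_le_mul_of_nonneg_left hS2 (by positivity)
    rw [hlogP, Real.rpow_def_of_pos hr, ← Real.exp_add]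
    apply Real.exp_le_exp.2
    rw [hsum]
    have hgoal1 : E + Real.log r * (p * q / (q - p)) =
        p * (Real.log r - Real.log (4 * DD)) * (1 / (1 - θ)) - p * Real.log 2 * Sθ := by
      rw [hn, hEdef]
      field_simp
      ring
    rw [hgoal1]
    linarith [hm1, hm2]
  -- endgame: pick K with θ^K small enough
  have hm0 : 0 < (μ (ball x (r / 2))).toReal :=
    ENNReal.toReal_pos (hballpos (r / 2) (by positivity)).ne' (hballfin _)
  set M : ℝ := min ((μ (ball x (r / 2))).toReal) 1 with hMdef
  have hM0 : 0 < M := lt_min hm0 one_pos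
  have hM1 : M ≤ 1 := min_le_right _ _
  have hlogM : Real.log M ≤ 0 := Real.log_nonpos hM0.le hM1
  have h1L : (0:ℝ) < 1 - Real.log M := by linarith
  obtain ⟨K, hK⟩ := exists_pow_lt_of_lt_one
    (show (0:ℝ) < Real.log 2 / (1 - Real.log M) from
      div_pos (Real.log_pos one_lt_two) h1L) hθ1
  have hθK : (0:ℝ) ≤ θ ^ K := pow_nonneg hθ0.le K
  have hKey2 : -Real.log 2 ≤ Real.log M * θ ^ K := by
    have h8 : θ ^ K * (-Real.log M) ≤
        (Real.log 2 / (1 - Real.log M)) * (-Real.log M) :=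
      mul_le_mul_of_nonneg_right hK.le (by linarith)
    have h9 : (Real.log 2 / (1 - Real.log M)) * (-Real.log M) ≤ Real.log 2 := by
      rw [div_mul_eq_mul_div, div_le_iff₀ h1L]
      exact mul_le_mul_of_nonneg_left (by linarith) (Real.log_nonneg one_le_two)
    linarith [h8.trans h9]
  have hMθ : (1:ℝ) / 2 ≤ M ^ (θ ^ K) := by
    rw [Real.rpow_def_of_pos hM0]
    have h10 : Real.exp (-Real.log 2) = 1 / 2 := by
      rw [Real.exp_neg, Real.exp_log two_pos]
      norm_num
    rw [← h10]
    exact Real.exp_le_exp.2 hKey2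
  have hball2 : ENNReal.ofReal M ≤ μ (ball x (R K)) := by
    calc ENNReal.ofReal M ≤ ENNReal.ofReal ((μ (ball x (r / 2))).toReal) :=
          ENNReal.ofReal_le_ofReal (min_le_left _ _)
      _ = μ (ball x (r / 2)) := ENNReal.ofReal_toReal (hballfin _)
      _ ≤ μ (ball x (R K)) := measure_mono (ball_subset_ball (hRhalf K))
  have hstep2 : ENNReal.ofReal (Real.exp E * r ^ (p * q / (q - p))) *
      ENNReal.ofReal (1 / 2) ≤ μ (ball x r) := by
    refine le_trans ?_ (iter K)
    apply mul_le_mul'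
    · exact ENNReal.ofReal_le_ofReal (hPbound K)
    · calc ENNReal.ofReal (1 / 2) ≤ ENNReal.ofReal (M ^ (θ ^ K)) :=
            ENNReal.ofReal_le_ofReal hMθ
        _ = (ENNReal.ofReal M) ^ (θ ^ K) := (ENNReal.ofReal_rpow_of_pos hM0).symm
        _ ≤ μ (ball x (R K)) ^ (θ ^ K) := ENNReal.rpow_le_rpow hball2 hθK
  calc ENNReal.ofReal (Real.exp E / 2 * r ^ (p * q / (q - p)))
      = ENNReal.ofReal (Real.exp E * r ^ (p * q / (q - p))) * ENNReal.ofReal (1 / 2) := by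
        rw [← ENNReal.ofReal_mul (by positivity)]
        congr 1
        ring
    _ ≤ μ (ball x r) := hstep2
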